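/- In a factorization of an oriented 1-cobordism through an intermediate signed set k of minimal cardinality, the isomorphism class of k as a signed set is uniquely determined: k is in sign-preserving bijection with im(l_m) ∩ im(l_n), where each element c of this intersection carries the common sign of l_m⁻¹(c) and l_n⁻¹(c). -/

import Mathlib

open scoped Classical

/-- The relation generating the pushout of a span `A ← k → B` of (finite) sets. -/
def PRel {k A B : Type} (f : k → A) (g : k → B) : A ⊕ B → A ⊕ B → Prop :=
  fun x y => ∃ z, x = Sum.inl (f z) ∧ y = Sum.inr (g z)

/-- The pushout of the span `A ← k → B`. -/
def Pushout {k A B : Type} (f : k → A) (g : k → B) : Type :=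
  Quot (PRel f g)

/-- Canonical map `ι_A : A → A ⊔_k B`. -/
def pInl {k A B : Type} (f : k → A) (g : k → B) (a : A) : Pushout f g :=
  Quot.mk _ (Sum.inl a)

/-- Canonical map `ι_B : B → A ⊔_k B`. -/
def pInr {k A B : Type} (f : k → A) (g : k → B) (b : B) : Pushout f g :=
  Quot.mk _ (Sum.inr b)

instance {k A B : Type} (f : k → A) (g : k → B) [Finite A] [Finite B] :
    Finite (Pushout f g) :=
  Quot.finite _

noncomputable instance {k A B : Type} (f : k → A) (g : k → B) [Fintype A] [Fintype B] :
    Fintype (Pushout f g) :=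
  Fintype.ofFinite _

/-- The genus formula of Definition 3.4:
`g(x) = 1 + Σ_{ι_A(a)=x}(g₁(a)−1) + Σ_{ι_B(b)=x}(g₂(b)−1) + #{y ∈ k : y ↦ x}`. -/
noncomputable def compGenus {k A B : Type} [Fintype k] [Fintype A] [Fintype B]
    (f : k → A) (g : k → B) (g1 : A → ℤ) (g2 : B → ℤ) (x : Pushout f g) : ℤ :=
  1 + (∑ a ∈ Finset.univ.filter (fun a => pInl f g a = x), (g1 a - 1))
    + (∑ b ∈ Finset.univ.filter (fun b => pInr f g b = x), (g2 b - 1))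
    + ((Finset.univ.filter (fun y : k => pInl f g (f y) = x)).card : ℤ)

/-- A combinatorial 2-cobordism from the finite set `m` to the finite set `n`. -/
structure Cob (m n : Type) : Type 1 where
  C : Type
  [fin : Fintype C]
  lm : m → C
  ln : n → C
  g : C → ℕ

attribute [instance] Cob.fin

/-- Composition of combinatorial 2-cobordisms via pushout of component sets
and the genus formula of Definition 3.4. -/
noncomputable def Cob.comp {m k n : Type} [Fintype k] (ψ : Cob k n) (φ : Cob m k) :
    Cob m n where
  C := Pushout φ.ln ψ.lm
  lm := fun x => pInl φ.ln ψ.lm (φ.lm x)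
  ln := fun y => pInr φ.ln ψ.lm (ψ.ln y)
  g := fun x =>
    (compGenus φ.ln ψ.lm (fun a => (φ.g a : ℤ)) (fun b => (ψ.g b : ℤ)) x).toNat

/-- Equivalence of combinatorial 2-cobordisms: a bijection of component sets
intertwining the structure maps and the genus functions. -/
def Cob.Equiv {m n : Type} (φ φ' : Cob m n) : Prop :=
  ∃ χ : φ.C ≃ φ'.C,
    (∀ x, χ (φ.lm x) = φ'.lm x) ∧ (∀ y, χ (φ.ln y) = φ'.ln y) ∧
    (∀ c, φ'.g (χ c) = φ.g c)

/-- A cofibration: `l_n` is injective and `l_n` lifts through `l_m`. -/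
def Cob.IsCofib {m n : Type} (φ : Cob m n) : Prop :=
  Function.Injective φ.ln ∧ ∃ u : n → m, ∀ y, φ.lm (u y) = φ.ln y

/-- A fibration: `l_m` is injective, `l_n` is surjective, and `g ∘ l_m = 0`. -/
def Cob.IsFib {m n : Type} (φ : Cob m n) : Prop :=
  Function.Injective φ.lm ∧ Function.Surjective φ.ln ∧ ∀ x, φ.g (φ.lm x) = 0

/-- The five local conditions of Definition 5.2.1 defining an oriented 1-cobordism
between signed finite sets (signs recorded by Boolean functions, `true` = `+`). -/
def IsOriented {m n C : Type} (sm : m → Bool) (sn : n → Bool)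
    (lm : m → C) (ln : n → C) : Prop :=
  ∀ c : C,
    (∃ a b : m, sm a = true ∧ sm b = false ∧ a ≠ b ∧
      (∀ x, lm x = c ↔ (x = a ∨ x = b)) ∧ (∀ y, ln y ≠ c)) ∨
    (∃ a b : n, sn a = true ∧ sn b = false ∧ a ≠ b ∧
      (∀ y, ln y = c ↔ (y = a ∨ y = b)) ∧ (∀ x, lm x ≠ c)) ∨
    (∃ a : m, ∃ b : n, sm a = sn b ∧
      (∀ x, lm x = c ↔ x = a) ∧ (∀ y, ln y = c ↔ y = b)) ∨
    ((∀ x, lm x ≠ c) ∧ (∀ y, ln y ≠ c))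


/-! ### Auxiliary material for stmt_18 -/

section StmtAux

/-- Auxiliary predicate for detecting a `k`-point in a pushout class. -/
def midProp {k A B : Type} (f : k → A) (g : k → B) : A ⊕ B → Prop
  | Sum.inl a => ∃ z : k, Quot.mk (PRel f g) (Sum.inl (f z)) = Quot.mk (PRel f g) (Sum.inl a)
  | Sum.inr _ => True

lemma midProp_resp {k A B : Type} (f : k → A) (g : k → B) :
    ∀ s t, PRel f g s t → midProp f g s = midProp f g t := by
  rintro s t ⟨z, rfl, rfl⟩
  simp only [midProp]
  exact propext ⟨fun _ => trivial, fun _ => ⟨z, rfl⟩⟩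

/-- If a left point equals a right point in the pushout, their class contains
the image of some point of `k`. -/
lemma pushout_mid {k A B : Type} (f : k → A) (g : k → B) (a : A) (b : B)
    (h : Quot.mk (PRel f g) (Sum.inl a) = Quot.mk (PRel f g) (Sum.inr b)) :
    ∃ z : k, Quot.mk (PRel f g) (Sum.inl (f z)) = Quot.mk (PRel f g) (Sum.inl a) := by
  have hh := congrArg (Quot.lift (midProp f g) (midProp_resp f g)) h
  exact cast hh.symm trivial

variable {m n C : Type} (sm : m → Bool) (sn : n → Bool) (lm : m → C) (ln : n → C)

/-- The intersection of the images, the candidate minimal intermediate set. -/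
abbrev K0 (lm : m → C) (ln : n → C) : Type := {c : C // (∃ x, lm x = c) ∧ ∃ y, ln y = c}

/-- Signs on `K0`. -/
noncomputable def sK0 : K0 lm ln → Bool := fun c => sm (Classical.choose c.2.1)

/-- Components of the left factor. -/
abbrev Cpsi (lm : m → C) (ln : n → C) : Type := {c : C // (∃ x, lm x = c) ∨ ¬ ∃ y, ln y = c}

/-- Components of the right factor. -/
abbrev Cchi (ln : n → C) : Type := {c : C // ∃ y, ln y = c}

/-- The left factor. -/
noncomputable def e0 [Fintype C] : Cob m (K0 lm ln) where
  C := Cpsi lm ln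
  fin := Fintype.ofFinite _
  lm := fun x => ⟨lm x, Or.inl ⟨x, rfl⟩⟩
  ln := fun c => ⟨c.1, Or.inl c.2.1⟩
  g := fun _ => 0

/-- The right factor. -/
noncomputable def f0 [Fintype C] : Cob (K0 lm ln) n where
  C := Cchi ln
  fin := Fintype.ofFinite _
  lm := fun c => ⟨c.1, c.2.2⟩
  ln := fun y => ⟨ln y, ⟨y, rfl⟩⟩
  g := fun _ => 0

variable [Fintype C]

lemma e0_oriented (h : IsOriented sm sn lm ln) :
    IsOriented sm (sK0 sm lm ln) (e0 lm ln).lm (e0 lm ln).ln := by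
  intro d
  rcases h d.1 with ⟨a, b, ha, hb, hab, hmem, hno⟩ | ⟨a, b, ha, hb, hab, hmem, hno⟩ |
    ⟨a, b, hs, hma, hnb⟩ | ⟨h1, h2⟩
  · left
    refine ⟨a, b, ha, hb, hab, fun x => ?_, fun c hc => ?_⟩
    · rw [show (e0 lm ln).lm x = d ↔ lm x = d.1 from Subtype.ext_iff]
      exact hmem x
    · obtain ⟨y, hy⟩ := c.2.2
      exact hno y (by rw [hy]; exact congrArg Subtype.val hc)
  · exfalso
    rcases d.2 with ⟨x, hx⟩ | hny
    · exact hno x hx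
    · exact hny ⟨a, (hmem a).mpr (Or.inl rfl)⟩
  · right; right; left
    have hk : (∃ x, lm x = d.1) ∧ ∃ y, ln y = d.1 := ⟨⟨a, (hma a).mpr rfl⟩, ⟨b, (hnb b).mpr rfl⟩⟩
    refine ⟨a, ⟨d.1, hk⟩, ?_, fun x => ?_, fun c => ?_⟩
    · show sm a = sm (Classical.choose hk.1)
      exact congrArg sm ((hma _).mp (Classical.choose_spec hk.1)).symm
    · rw [show (e0 lm ln).lm x = d ↔ lm x = d.1 from Subtype.ext_iff]
      exact hma x
    · constructor
      · intro hc
        exact Subtype.ext (show c.1 = d.1 from congrArg Subtype.val hc)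
      · intro hc
        exact Subtype.ext (show c.1 = d.1 from congrArg Subtype.val hc)
  · right; right; right
    refine ⟨fun x hx => h1 x (congrArg Subtype.val hx), fun c hc => ?_⟩
    obtain ⟨y, hy⟩ := c.2.2
    exact h2 y (by rw [hy]; exact congrArg Subtype.val hc)

lemma f0_oriented (h : IsOriented sm sn lm ln) :
    IsOriented (sK0 sm lm ln) sn (f0 lm ln).lm (f0 lm ln).ln := by
  intro d
  rcases h d.1 with ⟨a, b, ha, hb, hab, hmem, hno⟩ | ⟨a, b, ha, hb, hab, hmem, hno⟩ |
    ⟨a, b, hs, hma, hnb⟩ | ⟨h1, h2⟩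
  · exfalso
    obtain ⟨y, hy⟩ := d.2
    exact hno y hy
  · right; left
    refine ⟨a, b, ha, hb, hab, fun y => ?_, fun c hc => ?_⟩
    · rw [show (f0 lm ln).ln y = d ↔ ln y = d.1 from Subtype.ext_iff]
      exact hmem y
    · obtain ⟨x, hx⟩ := c.2.1
      exact hno x (by rw [hx]; exact congrArg Subtype.val hc)
  · right; right; left
    have hk : (∃ x, lm x = d.1) ∧ ∃ y, ln y = d.1 := ⟨⟨a, (hma a).mpr rfl⟩, ⟨b, (hnb b).mpr rfl⟩⟩
    refine ⟨⟨d.1, hk⟩, b, ?_, fun c => ?_, fun y => ?_⟩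
    · show sm (Classical.choose hk.1) = sn b
      rw [(hma _).mp (Classical.choose_spec hk.1)]; exact hs
    · constructor
      · intro hc; exact Subtype.ext (show c.1 = d.1 from congrArg Subtype.val hc)
      · intro hc; exact Subtype.ext (show c.1 = d.1 from congrArg Subtype.val hc)
    · rw [show (f0 lm ln).ln y = d ↔ ln y = d.1 from Subtype.ext_iff]
      exact hnb y
  · exfalso
    obtain ⟨y, hy⟩ := d.2
    exact h2 y hy

/-- Collapse the pushout of the canonical factorization back to `C`. -/
noncomputable def P0 : Pushout (e0 lm ln).ln (f0 lm ln).lm → C :=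
  Quot.lift (fun s => Sum.rec (fun d => d.1) (fun d => d.1) s)
    (by rintro s t ⟨z, rfl, rfl⟩; rfl)

/-- Inverse of `P0`. -/
noncomputable def Q0 : C → Pushout (e0 lm ln).ln (f0 lm ln).lm := fun c =>
  if hy : ∃ y, ln y = c then Quot.mk _ (Sum.inr ⟨c, hy⟩)
  else Quot.mk _ (Sum.inl ⟨c, Or.inr hy⟩)

lemma P0_Q0 (c : C) : P0 lm ln (Q0 lm ln c) = c := by
  unfold Q0
  by_cases hy : ∃ y, ln y = c
  · exact Eq.trans (congrArg (P0 lm ln) (dif_pos hy)) rfl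
  · exact Eq.trans (congrArg (P0 lm ln) (dif_neg hy)) rfl

lemma Q0_P0 (q : Pushout (e0 lm ln).ln (f0 lm ln).lm) : Q0 lm ln (P0 lm ln q) = q := by
  induction q using Quot.ind with
  | _ s =>
    rcases s with d | d
    · show Q0 lm ln d.1 = _
      unfold Q0
      by_cases hy : ∃ y, ln y = d.1
      · refine Eq.trans (dif_pos hy) ?_
        rcases d.2 with hx | hny
        · exact (Quot.sound ⟨⟨d.1, hx, hy⟩, congrArg Sum.inl (Subtype.ext rfl), rfl⟩).symm
        · exact absurd hy hny
      · refine Eq.trans (dif_neg hy) ?_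
        congr 1
    · show Q0 lm ln d.1 = _
      unfold Q0
      refine Eq.trans (dif_pos d.2) ?_
      exact congrArg _ (congrArg Sum.inr (Subtype.ext rfl))

lemma mk_inl_eq_iff (d : Cpsi lm ln) (q : Pushout (e0 lm ln).ln (f0 lm ln).lm) :
    Quot.mk (PRel (e0 lm ln).ln (f0 lm ln).lm) (Sum.inl d) = q ↔ d.1 = P0 lm ln q := by
  constructor
  · intro hh; exact congrArg (P0 lm ln) hh
  · intro hh
    have : Q0 lm ln d.1 = Q0 lm ln (P0 lm ln q) := congrArg _ hh
    rw [Q0_P0] at this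
    rw [← this]
    exact (Q0_P0 lm ln (Quot.mk _ (Sum.inl d))).symm

lemma mk_inr_eq_iff (d : Cchi ln) (q : Pushout (e0 lm ln).ln (f0 lm ln).lm) :
    Quot.mk (PRel (e0 lm ln).ln (f0 lm ln).lm) (Sum.inr d) = q ↔ d.1 = P0 lm ln q := by
  constructor
  · intro hh; exact congrArg (P0 lm ln) hh
  · intro hh
    have : Q0 lm ln d.1 = Q0 lm ln (P0 lm ln q) := congrArg _ hh
    rw [Q0_P0] at this
    rw [← this]
    exact (Q0_P0 lm ln (Quot.mk _ (Sum.inr d))).symm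

lemma e0_g (d : (e0 lm ln).C) : (e0 lm ln).g d = 0 := rfl

lemma f0_g (d : (f0 lm ln).C) : (f0 lm ln).g d = 0 := rfl

lemma comp0_genus {iK : Fintype (K0 lm ln)} {iA : Fintype (e0 lm ln).C}
    {iB : Fintype (f0 lm ln).C} (q : Pushout (e0 lm ln).ln (f0 lm ln).lm) :
    @compGenus _ _ _ iK iA iB (e0 lm ln).ln (f0 lm ln).lm
      (fun a => ((e0 lm ln).g a : ℤ)) (fun b => ((f0 lm ln).g b : ℤ)) q = 0 := by
  by_cases hp : ∃ x, lm x = P0 lm ln q <;> by_cases hq : ∃ y, ln y = P0 lm ln q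
  · have hA : Finset.univ.filter (fun d : (e0 lm ln).C => pInl (e0 lm ln).ln (f0 lm ln).lm d = q)
        = {@id (e0 lm ln).C ⟨P0 lm ln q, Or.inl hp⟩} := by
      ext d
      simp only [Finset.mem_filter, Finset.mem_univ, true_and, Finset.mem_singleton]
      constructor
      · intro hd; exact Subtype.ext ((mk_inl_eq_iff lm ln d q).mp hd)
      · intro hd; exact (mk_inl_eq_iff lm ln d q).mpr (congrArg Subtype.val hd)
    have hB : Finset.univ.filter (fun d : (f0 lm ln).C => pInr (e0 lm ln).ln (f0 lm ln).lm d = q)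
        = {@id (f0 lm ln).C ⟨P0 lm ln q, hq⟩} := by
      ext d
      simp only [Finset.mem_filter, Finset.mem_univ, true_and, Finset.mem_singleton]
      constructor
      · intro hd; exact Subtype.ext ((mk_inr_eq_iff lm ln d q).mp hd)
      · intro hd; exact (mk_inr_eq_iff lm ln d q).mpr (congrArg Subtype.val hd)
    have hK : Finset.univ.filter
          (fun z : K0 lm ln => pInl (e0 lm ln).ln (f0 lm ln).lm ((e0 lm ln).ln z) = q)
        = {(⟨P0 lm ln q, hp, hq⟩ : K0 lm ln)} := by
      ext z
      simp only [Finset.mem_filter, Finset.mem_univ, true_and, Finset.mem_singleton]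
      constructor
      · intro hd; exact Subtype.ext ((mk_inl_eq_iff lm ln ((e0 lm ln).ln z) q).mp hd)
      · intro hd
        exact (mk_inl_eq_iff lm ln ((e0 lm ln).ln z) q).mpr (congrArg Subtype.val hd)
    unfold compGenus
    rw [hA, hB, hK, Finset.sum_singleton, Finset.sum_singleton, Finset.card_singleton]
    norm_num [e0_g, f0_g]
  · have hA : Finset.univ.filter (fun d : (e0 lm ln).C => pInl (e0 lm ln).ln (f0 lm ln).lm d = q)
        = {@id (e0 lm ln).C ⟨P0 lm ln q, Or.inl hp⟩} := by
      ext d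
      simp only [Finset.mem_filter, Finset.mem_univ, true_and, Finset.mem_singleton]
      constructor
      · intro hd; exact Subtype.ext ((mk_inl_eq_iff lm ln d q).mp hd)
      · intro hd; exact (mk_inl_eq_iff lm ln d q).mpr (congrArg Subtype.val hd)
    have hB : Finset.univ.filter (fun d : (f0 lm ln).C => pInr (e0 lm ln).ln (f0 lm ln).lm d = q)
        = (∅ : Finset (f0 lm ln).C) := by
      rw [Finset.filter_eq_empty_iff]
      intro d _ hd
      exact hq (((mk_inr_eq_iff lm ln d q).mp hd) ▸ d.2)
    have hK : Finset.univ.filter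
          (fun z : K0 lm ln => pInl (e0 lm ln).ln (f0 lm ln).lm ((e0 lm ln).ln z) = q)
        = (∅ : Finset (K0 lm ln)) := by
      rw [Finset.filter_eq_empty_iff]
      intro z _ hd
      exact hq (((mk_inl_eq_iff lm ln ((e0 lm ln).ln z) q).mp hd) ▸ z.2.2)
    unfold compGenus
    rw [hA, hB, hK, Finset.sum_singleton, Finset.sum_empty, Finset.card_empty]
    norm_num [e0_g, f0_g]
  · have hA : Finset.univ.filter (fun d : (e0 lm ln).C => pInl (e0 lm ln).ln (f0 lm ln).lm d = q)
        = (∅ : Finset (e0 lm ln).C) := by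
      rw [Finset.filter_eq_empty_iff]
      intro d _ hd
      rcases ((mk_inl_eq_iff lm ln d q).mp hd) ▸ d.2 with hx | hny
      · exact hp hx
      · exact hny hq
    have hB : Finset.univ.filter (fun d : (f0 lm ln).C => pInr (e0 lm ln).ln (f0 lm ln).lm d = q)
        = {@id (f0 lm ln).C ⟨P0 lm ln q, hq⟩} := by
      ext d
      simp only [Finset.mem_filter, Finset.mem_univ, true_and, Finset.mem_singleton]
      constructor
      · intro hd; exact Subtype.ext ((mk_inr_eq_iff lm ln d q).mp hd)
      · intro hd; exact (mk_inr_eq_iff lm ln d q).mpr (congrArg Subtype.val hd)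
    have hK : Finset.univ.filter
          (fun z : K0 lm ln => pInl (e0 lm ln).ln (f0 lm ln).lm ((e0 lm ln).ln z) = q)
        = (∅ : Finset (K0 lm ln)) := by
      rw [Finset.filter_eq_empty_iff]
      intro z _ hd
      exact hp (((mk_inl_eq_iff lm ln ((e0 lm ln).ln z) q).mp hd) ▸ z.2.1)
    unfold compGenus
    rw [hA, hB, hK, Finset.sum_empty, Finset.sum_singleton, Finset.card_empty]
    norm_num [e0_g, f0_g]
  · have hA : Finset.univ.filter (fun d : (e0 lm ln).C => pInl (e0 lm ln).ln (f0 lm ln).lm d = q)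
        = {@id (e0 lm ln).C ⟨P0 lm ln q, Or.inr hq⟩} := by
      ext d
      simp only [Finset.mem_filter, Finset.mem_univ, true_and, Finset.mem_singleton]
      constructor
      · intro hd; exact Subtype.ext ((mk_inl_eq_iff lm ln d q).mp hd)
      · intro hd; exact (mk_inl_eq_iff lm ln d q).mpr (congrArg Subtype.val hd)
    have hB : Finset.univ.filter (fun d : (f0 lm ln).C => pInr (e0 lm ln).ln (f0 lm ln).lm d = q)
        = (∅ : Finset (f0 lm ln).C) := by
      rw [Finset.filter_eq_empty_iff]
      intro d _ hd
      exact hq (((mk_inr_eq_iff lm ln d q).mp hd) ▸ d.2)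
    have hK : Finset.univ.filter
          (fun z : K0 lm ln => pInl (e0 lm ln).ln (f0 lm ln).lm ((e0 lm ln).ln z) = q)
        = (∅ : Finset (K0 lm ln)) := by
      rw [Finset.filter_eq_empty_iff]
      intro z _ hd
      exact hq (((mk_inl_eq_iff lm ln ((e0 lm ln).ln z) q).mp hd) ▸ z.2.2)
    unfold compGenus
    rw [hA, hB, hK, Finset.sum_singleton, Finset.sum_empty, Finset.card_empty]
    norm_num [e0_g, f0_g]

lemma comp0_equiv :
    Cob.Equiv (@Cob.comp m (K0 lm ln) n (Fintype.ofFinite _) (f0 lm ln) (e0 lm ln))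
      ({ C := C, lm := lm, ln := ln, g := fun _ => 0 } : Cob m n) := by
  refine ⟨{ toFun := P0 lm ln, invFun := Q0 lm ln,
            left_inv := Q0_P0 lm ln, right_inv := P0_Q0 lm ln },
          fun x => rfl, fun y => rfl, fun cc => ?_⟩
  show (0 : ℕ) = _
  simp only [Cob.comp]
  erw [comp0_genus lm ln cc]
  rfl

end StmtAux

/-- Lemma 5.4.4: in a factorization of an oriented 1-cobordism through
an intermediate signed set `k` of minimal cardinality, `k` is in sign-preserving
bijection with `im(l_m) ∩ im(l_n)`, each element of which carries the common sign of
its preimages. -/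
theorem stmt_18 {m n C : Type} [Fintype m] [Fintype n] [Fintype C]
    (sm : m → Bool) (sn : n → Bool) (lm : m → C) (ln : n → C)
    (h : IsOriented sm sn lm ln)
    (k : Type) (fk : Fintype k) (sk : k → Bool)
    (e : Cob m k) (f : Cob k n)
    (heg : ∀ a, e.g a = 0) (hfg : ∀ b, f.g b = 0)
    (heo : IsOriented sm sk e.lm e.ln) (hfo : IsOriented sk sn f.lm f.ln)
    (hcomp : Cob.Equiv (@Cob.comp m k n fk f e)
      ({ C := C, lm := lm, ln := ln, g := fun _ => 0 } : Cob m n))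
    (hmin : ∀ (k' : Type) (fk' : Fintype k') (sk' : k' → Bool)
        (e' : Cob m k') (f' : Cob k' n),
        (∀ a, e'.g a = 0) → (∀ b, f'.g b = 0) →
        IsOriented sm sk' e'.lm e'.ln → IsOriented sk' sn f'.lm f'.ln →
        Cob.Equiv (@Cob.comp m k' n fk' f' e')
          ({ C := C, lm := lm, ln := ln, g := fun _ => 0 } : Cob m n) →
        Nat.card k ≤ Nat.card k') :
    ∃ eq : k ≃ {c : C // (∃ x, lm x = c) ∧ ∃ y, ln y = c},
      ∀ z, ∀ x : m, lm x = (eq z).1 → sm x = sk z := by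
  haveI := fk
  obtain ⟨χ, hχm, hχn, _⟩ := hcomp
  -- for every `c` in the image intersection, the class `χ⁻¹ c` contains a `k`-point
  have key : ∀ c : K0 lm ln, ∃ z : k,
      χ (Quot.mk (PRel e.ln f.lm) (Sum.inl (e.ln z))) = c.1 := by
    rintro ⟨c, ⟨x, hx⟩, ⟨y, hy⟩⟩
    have h1 : χ (Quot.mk (PRel e.ln f.lm) (Sum.inl (e.lm x))) = c := hx ▸ hχm x
    have h2 : χ (Quot.mk (PRel e.ln f.lm) (Sum.inr (f.ln y))) = c := hy ▸ hχn y
    have h3 : Quot.mk (PRel e.ln f.lm) (Sum.inl (e.lm x))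
        = Quot.mk (PRel e.ln f.lm) (Sum.inr (f.ln y)) :=
      χ.injective (h1.trans h2.symm)
    obtain ⟨z, hz⟩ := pushout_mid e.ln f.lm (e.lm x) (f.ln y) h3
    exact ⟨z, by rw [hz]; exact h1⟩
  choose ι hι using key
  have hinj : Function.Injective ι := by
    intro c c' hcc
    apply Subtype.ext
    rw [← hι c, ← hι c', hcc]
  have hge : Nat.card (K0 lm ln) ≤ Nat.card k := Nat.card_le_card_of_injective ι hinj
  have hle : Nat.card k ≤ Nat.card (K0 lm ln) :=
    hmin (K0 lm ln) (Fintype.ofFinite _) (sK0 sm lm ln) (e0 lm ln) (f0 lm ln)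
      (fun _ => rfl) (fun _ => rfl) (e0_oriented sm sn lm ln h) (f0_oriented sm sn lm ln h)
      (comp0_equiv lm ln)
  have hbij : Function.Bijective ι :=
    (Nat.bijective_iff_injective_and_card ι).mpr ⟨hinj, le_antisymm hge hle⟩
  set E := Equiv.ofBijective ι hbij with hE
  refine ⟨E.symm, ?_⟩
  intro z x hx
  have hiz : ι (E.symm z) = z := E.apply_symm_apply z
  have hkey : χ (Quot.mk (PRel e.ln f.lm) (Sum.inl (e.ln z))) = (E.symm z).1 := by
    conv_lhs => rw [← hiz]
    exact hι (E.symm z)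
  rcases heo (e.ln z) with ⟨a, b, _, _, _, _, hno⟩ | ⟨a, b, _, _, hab, hmem, _⟩ |
    ⟨a, b, hs, hmam, hmbk⟩ | ⟨_, h2⟩
  · exact absurd rfl (hno z)
  · -- two `k`-points on this component: contradicts bijectivity
    exfalso
    have hz : z = a ∨ z = b := (hmem z).mp rfl
    obtain ⟨z', hz'ne, hz'⟩ : ∃ z', z' ≠ z ∧ e.ln z' = e.ln z := by
      rcases hz with rfl | rfl
      · exact ⟨b, fun hh => hab hh.symm, (hmem b).mpr (Or.inr rfl)⟩
      · exact ⟨a, hab, (hmem a).mpr (Or.inl rfl)⟩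
    have hiz' : ι (E.symm z') = z' := E.apply_symm_apply z'
    have hkey' : χ (Quot.mk (PRel e.ln f.lm) (Sum.inl (e.ln z'))) = (E.symm z').1 := by
      conv_lhs => rw [← hiz']
      exact hι (E.symm z')
    rw [hz'] at hkey'
    have : E.symm z' = E.symm z := Subtype.ext (hkey'.symm.trans hkey)
    exact hz'ne (by rw [← hiz', this, hiz])
  · -- a through-strand: transfer the sign
    have hzb : z = b := (hmbk z).mp rfl
    have hla : e.lm a = e.ln z := (hmam a).mpr rfl
    have hca : lm a = (E.symm z).1 := by
      have h5 : χ (Quot.mk (PRel e.ln f.lm) (Sum.inl (e.lm a))) = lm a := hχm a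
      rw [hla] at h5
      exact h5.symm.trans hkey
    -- uniqueness of the `m`-preimage of `(E.symm z).1`
    have hxa : x = a := by
      obtain ⟨hcm, hcn⟩ := (E.symm z).2
      rcases h (E.symm z).1 with ⟨_, _, _, _, _, _, hno⟩ | ⟨_, _, _, _, _, _, hno⟩ |
        ⟨a', _, _, hma', _⟩ | ⟨hno, _⟩
      · obtain ⟨y, hy⟩ := hcn; exact absurd hy (hno y)
      · obtain ⟨x', hx'⟩ := hcm; exact absurd hx' (hno x')
      · rw [(hma' x).mp hx, ← (hma' a).mp hca]
      · obtain ⟨x', hx'⟩ := hcm; exact absurd hx' (hno x')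
    rw [hxa, hzb]
    exact hs
  · exact absurd rfl (h2 z)
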